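/- Let (t_{s,j}) be a solution of the system (dist)–(ne2), and for each j let d_j be the number of indices s with t_{s,j} > 0 (so t_{s,j} > 0 exactly for s ≤ d_j). Then the thresholds are monotone: d_j ≥ d_{j+1} for every j ∈ {1,…,n−1}. -/

import Mathlib

/-- Probability of at least `m` successes in `l-1` Bernoulli(x) trials. -/
noncomputable def w (l m : ℕ) (x : ℝ) : ℝ :=
  ∑ i ∈ Finset.Icc m (l - 1), ((l - 1).choose i : ℝ) * x ^ i * (1 - x) ^ (l - 1 - i)

/-- `W x = 1 - w x`. -/
noncomputable def W (l m : ℕ) (x : ℝ) : ℝ := 1 - w l m x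

/-- `γ_{s,j} = ∑_{k=j}^n t_{s,k} q_k`. -/
noncomputable def gam (n : ℕ) (q : ℕ → ℝ) (t : ℕ → ℕ → ℝ) (s j : ℕ) : ℝ :=
  ∑ k ∈ Finset.Icc j n, t s k * q k

/-- `(t_{s,j})` is a solution of the system (dist)–(ne2). -/
def IsSolution (l m d n : ℕ) (M q : ℕ → ℝ) (t : ℕ → ℕ → ℝ) : Prop :=
  (∀ s ∈ Finset.Icc 1 d, ∀ j ∈ Finset.Icc 1 n, 0 ≤ t s j) ∧
  ∀ j ∈ Finset.Icc 1 n,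
    (∑ s ∈ Finset.Icc 1 d, t s j) = 1 ∧
    ∃ dj ∈ Finset.Icc 1 d,
      (∀ s ∈ Finset.Icc 1 d, s ≤ dj → 0 < t s j) ∧
      (∀ s ∈ Finset.Icc 1 d, dj < s → t s j = 0) ∧
      (∀ s ∈ Finset.Icc 1 dj,
        M s * W l m (gam n q t s j) = M 1 * W l m (gam n q t 1 j)) ∧
      (∀ s, dj ≤ s → s < d →
        M (s + 1) * W l m (gam n q t (s + 1) j) ≤ M s * W l m (gam n q t s j))

lemma w_hasDerivAt (l m : ℕ) (hm : 1 ≤ m) (hml : m ≤ l - 1) (x : ℝ) :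
    HasDerivAt (w l m)
      ((m * (l - 1).choose m : ℕ) * x ^ (m - 1) * (1 - x) ^ (l - 1 - m)) x := by
  set L := l - 1 with hL
  set G : ℕ → ℝ := fun i => ((i * L.choose i : ℕ) : ℝ) * x ^ (i - 1) * (1 - x) ^ (L - i) with hG
  have key : ∀ i ∈ Finset.Icc m L,
      HasDerivAt (fun y : ℝ => ((L.choose i : ℝ)) * y ^ i * (1 - y) ^ (L - i))
        (G i - G (i + 1)) x := by
    intro i hi
    simp only [Finset.mem_Icc] at hi
    have h1 : HasDerivAt (fun y : ℝ => y ^ i) (i * x ^ (i - 1)) x := hasDerivAt_pow i x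
    have h2 : HasDerivAt (fun y : ℝ => (1 - y) ^ (L - i))
        (((L - i : ℕ) : ℝ) * (1 - x) ^ (L - i - 1) * (-1)) x :=
      ((hasDerivAt_id x).const_sub 1).pow (L - i)
    have h3 := (h1.mul h2).const_mul ((L.choose i : ℝ))
    have hfun : (fun y : ℝ => ((L.choose i : ℝ)) * y ^ i * (1 - y) ^ (L - i))
        = (fun y : ℝ => ((L.choose i : ℝ)) * (y ^ i * (1 - y) ^ (L - i))) := by
      funext y; ring
    rw [hfun]
    have hcast : ((L.choose (i+1) : ℕ) : ℝ) * ((i : ℝ) + 1) = (L.choose i : ℝ) * ((L - i : ℕ) : ℝ) := by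
      have := Nat.choose_succ_right_eq L i
      exact_mod_cast congrArg (fun z : ℕ => (z : ℝ)) this
    have hval : G i - G (i + 1)
        = (L.choose i : ℝ) * ((i : ℝ) * x ^ (i - 1) * (1 - x) ^ (L - i)
           + x ^ i * (((L - i : ℕ) : ℝ) * (1 - x) ^ (L - i - 1) * (-1))) := by
      simp only [hG]
      have e1 : i + 1 - 1 = i := by omega
      have e2 : L - (i + 1) = L - i - 1 := by omega
      rw [e1, e2]
      push_cast
      linear_combination (-(x ^ i * (1 - x) ^ (L - i - 1))) * hcast
    rw [hval]
    exact h3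
  have hsum := HasDerivAt.fun_sum key
  have htel : (∑ i ∈ Finset.Icc m L, (G i - G (i + 1))) = G m := by
    have hIcc : Finset.Icc m L = Finset.Ico m (L + 1) := by
      ext k; simp [Finset.mem_Icc, Finset.mem_Ico]
    rw [hIcc, Finset.sum_Ico_eq_sum_range]
    rw [show (∑ i ∈ Finset.range (L + 1 - m), (G (m + i) - G (m + i + 1)))
        = G (m + 0) - G (m + (L + 1 - m)) from Finset.sum_range_sub' (fun k => G (m + k)) _]
    have hml' : m + (L + 1 - m) = L + 1 := by omega
    have hzero : G (L + 1) = 0 := by simp [hG, Nat.choose_succ_self]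
    rw [hml', hzero, Nat.add_zero, sub_zero]
  rw [htel] at hsum
  exact hsum

lemma w_strictMonoOn (l m : ℕ) (hm : 1 ≤ m) (hml : m ≤ l - 1) :
    StrictMonoOn (w l m) (Set.Icc 0 1) := by
  apply strictMonoOn_of_deriv_pos (convex_Icc 0 1)
  · exact fun x _ => ((w_hasDerivAt l m hm hml x).differentiableAt).continuousAt.continuousWithinAt
  · intro x hx
    rw [interior_Icc, Set.mem_Ioo] at hx
    rw [(w_hasDerivAt l m hm hml x).deriv]
    have h1 : (0:ℝ) < (m * (l - 1).choose m : ℕ) := by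
      have := Nat.choose_pos hml
      positivity
    have h2 : (0:ℝ) < x ^ (m - 1) := pow_pos hx.1 _
    have h3 : (0:ℝ) < (1 - x) ^ (l - 1 - m) := pow_pos (by linarith [hx.2]) _
    positivity

theorem stmt2 (l m d n : ℕ) (hm : 1 ≤ m) (hml : m ≤ l - 1) (hd : 2 ≤ d) (hn : 1 ≤ n)
    (M q : ℕ → ℝ)
    (hM : ∀ s ∈ Finset.Icc 1 d, ∀ r ∈ Finset.Icc 1 d, s ≤ r → M r ≤ M s)
    (hMpos : ∀ s ∈ Finset.Icc 1 d, 0 < M s)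
    (hq : ∀ j ∈ Finset.Icc 1 n, 0 < q j)
    (hqsum : ∑ j ∈ Finset.Icc 1 n, q j < 1)
    (t : ℕ → ℕ → ℝ) (hsol : IsSolution l m d n M q t)
    (j : ℕ) (hj : 1 ≤ j) (hjn : j + 1 ≤ n) :
    ((Finset.Icc 1 d).filter (fun s => 0 < t s (j + 1))).card ≤
      ((Finset.Icc 1 d).filter (fun s => 0 < t s j)).card := by
  obtain ⟨hnn, hP⟩ := hsol
  have hjmem : j ∈ Finset.Icc 1 n := by simp [Finset.mem_Icc]; omega
  have hj1mem : j + 1 ∈ Finset.Icc 1 n := by simp [Finset.mem_Icc]; omega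
  obtain ⟨hsum1, d1, hd1mem, hpos1, hzero1, heq1, hchain1⟩ := hP j hjmem
  obtain ⟨hsum2, d2, hd2mem, hpos2, hzero2, heq2, hchain2⟩ := hP (j + 1) hj1mem
  rw [Finset.mem_Icc] at hd1mem hd2mem
  -- the filter sets are initial segments
  have hcard : ∀ (j' dj : ℕ), 1 ≤ dj → dj ≤ d →
      (∀ s ∈ Finset.Icc 1 d, s ≤ dj → 0 < t s j') →
      (∀ s ∈ Finset.Icc 1 d, dj < s → t s j' = 0) →
      (Finset.Icc 1 d).filter (fun s => 0 < t s j') = Finset.Icc 1 dj := by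
    intro j' dj hdj1 hdjd hpos hzero
    ext s
    simp only [Finset.mem_filter, Finset.mem_Icc]
    constructor
    · rintro ⟨⟨h1, h2⟩, h3⟩
      refine ⟨h1, ?_⟩
      by_contra h
      push_neg at h
      have := hzero s (by simp [Finset.mem_Icc]; omega) h
      linarith
    · rintro ⟨h1, h2⟩
      exact ⟨⟨h1, le_trans h2 hdjd⟩, hpos s (by simp [Finset.mem_Icc]; omega) h2⟩
  rw [hcard j d1 hd1mem.1 hd1mem.2 hpos1 hzero1,
      hcard (j + 1) d2 hd2mem.1 hd2mem.2 hpos2 hzero2]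
  simp only [Nat.card_Icc]
  by_contra hcon
  push_neg at hcon
  have hlt : d1 < d2 := by omega
  -- basic gamma estimates
  have ht_le : ∀ s ∈ Finset.Icc 1 d, ∀ k ∈ Finset.Icc 1 n, t s k ≤ 1 := by
    intro s hs k hk
    calc t s k ≤ ∑ s' ∈ Finset.Icc 1 d, t s' k :=
          Finset.single_le_sum (fun s' hs' => hnn s' hs' k hk) hs
      _ = 1 := (hP k hk).1
  have hmemIcc : ∀ k j' : ℕ, 1 ≤ j' → k ∈ Finset.Icc j' n → k ∈ Finset.Icc 1 n := by
    intro k j' h1 hk; rw [Finset.mem_Icc] at *; omega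
  have hgam_nonneg : ∀ s ∈ Finset.Icc 1 d, ∀ j' : ℕ, 1 ≤ j' → 0 ≤ gam n q t s j' := by
    intro s hs j' hj'
    apply Finset.sum_nonneg
    intro k hk
    exact mul_nonneg (hnn s hs k (hmemIcc k j' hj' hk)) (hq k (hmemIcc k j' hj' hk)).le
  have hgam_lt : ∀ s ∈ Finset.Icc 1 d, ∀ j' : ℕ, 1 ≤ j' → gam n q t s j' < 1 := by
    intro s hs j' hj'
    have h1 : gam n q t s j' ≤ ∑ k ∈ Finset.Icc j' n, q k := by
      apply Finset.sum_le_sum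
      intro k hk
      have hk1 := hmemIcc k j' hj' hk
      nlinarith [ht_le s hs k hk1, hq k hk1, hnn s hs k hk1]
    have h2 : (∑ k ∈ Finset.Icc j' n, q k) ≤ ∑ k ∈ Finset.Icc 1 n, q k := by
      apply Finset.sum_le_sum_of_subset_of_nonneg
      · intro k hk; exact hmemIcc k j' hj' hk
      · intro k hk _; exact (hq k hk).le
    linarith
  have hsplit : ∀ s, gam n q t s j = t s j * q j + gam n q t s (j + 1) := by
    intro s
    unfold gam
    have hins : Finset.Icc j n = insert j (Finset.Icc (j + 1) n) := by
      ext k; simp [Finset.mem_Icc]; omega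
    rw [hins, Finset.sum_insert (by simp [Finset.mem_Icc])]
  -- the contradiction
  set s0 := d1 + 1 with hs0
  have hs0d : s0 ≤ d := by omega
  have hs0mem : s0 ∈ Finset.Icc 1 d := by simp [Finset.mem_Icc]; omega
  have h1mem : (1 : ℕ) ∈ Finset.Icc 1 d := by simp [Finset.mem_Icc]; omega
  have ht0 : t s0 j = 0 := hzero1 s0 hs0mem (by omega)
  have hγeq : gam n q t s0 j = gam n q t s0 (j + 1) := by
    rw [hsplit s0, ht0]; ring
  have hA : M s0 * W l m (gam n q t s0 j) ≤ M d1 * W l m (gam n q t d1 j) :=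
    hchain1 d1 le_rfl (by omega)
  have hB : M d1 * W l m (gam n q t d1 j) = M 1 * W l m (gam n q t 1 j) :=
    heq1 d1 (by simp [Finset.mem_Icc]; omega)
  have hC : M s0 * W l m (gam n q t s0 (j + 1)) = M 1 * W l m (gam n q t 1 (j + 1)) :=
    heq2 s0 (by simp [Finset.mem_Icc]; omega)
  have hγlt : gam n q t 1 (j + 1) < gam n q t 1 j := by
    rw [hsplit 1]
    have ht1 : 0 < t 1 j := hpos1 1 h1mem (by omega)
    nlinarith [hq j hjmem]
  have hWlt : W l m (gam n q t 1 j) < W l m (gam n q t 1 (j + 1)) := by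
    unfold W
    have hmono := w_strictMonoOn l m hm hml
    have ha : gam n q t 1 (j + 1) ∈ Set.Icc (0:ℝ) 1 :=
      ⟨hgam_nonneg 1 h1mem (j + 1) (by omega), (hgam_lt 1 h1mem (j + 1) (by omega)).le⟩
    have hb : gam n q t 1 j ∈ Set.Icc (0:ℝ) 1 :=
      ⟨hgam_nonneg 1 h1mem j hj, (hgam_lt 1 h1mem j hj).le⟩
    have := hmono ha hb hγlt
    linarith
  have hM1 : 0 < M 1 := hMpos 1 h1mem
  rw [hγeq] at hA
  have := mul_lt_mul_of_pos_left hWlt hM1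
  linarith
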